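/- Under the setup of Theorem 1, if PPV_L < PPV_H and TPR_L ≥ TPR_H, then L is over-represented among positive classifications: P[G=L|ŷ=1] > P[G=L|Y=1]. -/

import Mathlib

open MeasureTheory

/-- Conditional probability `P[A | B]` as a real number. -/
noncomputable def condProb {Ω : Type*} [MeasurableSpace Ω] (P : Measure Ω) (A B : Set Ω) : ℝ :=
  (P (A ∩ B)).toReal / (P B).toReal

/-- If PPV_L < PPV_H and TPR_L ≥ TPR_H then L is over-represented among
positive classifications. -/
theorem over_representation_of_lower_ppv
    {Ω : Type*} [MeasurableSpace Ω] (P : Measure Ω) [IsProbabilityMeasure P]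
    (Y1 Yhat1 EL : Set Ω)
    (hY1 : MeasurableSet Y1) (hYhat1 : MeasurableSet Yhat1) (hEL : MeasurableSet EL)
    (hELpos : P EL ≠ 0) (hEHpos : P ELᶜ ≠ 0)
    (hY1pos : P Y1 ≠ 0) (hY0pos : P Y1ᶜ ≠ 0)
    (hYhat1pos : P Yhat1 ≠ 0) (hYhat0pos : P Yhat1ᶜ ≠ 0)
    (hYGL : P (Y1 ∩ EL) ≠ 0) (hYGH : P (Y1 ∩ ELᶜ) ≠ 0)
    (hY0GL : P (Y1ᶜ ∩ EL) ≠ 0) (hY0GH : P (Y1ᶜ ∩ ELᶜ) ≠ 0)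
    (hYhGL : P (Yhat1 ∩ EL) ≠ 0) (hYhGH : P (Yhat1 ∩ ELᶜ) ≠ 0)
    (hYh0GL : P (Yhat1ᶜ ∩ EL) ≠ 0) (hYh0GH : P (Yhat1ᶜ ∩ ELᶜ) ≠ 0)
    (μL μH : ℝ)
    (hμL : μL = condProb P Y1 EL) (hμH : μH = condProb P Y1 ELᶜ)
    (h0 : 0 < μL) (h1 : μL < μH) (h2 : μH < 1)
    (TPRL TPRH FPRL FPRH : ℝ)
    (hTPRL : TPRL = condProb P Yhat1 (Y1 ∩ EL))
    (hTPRH : TPRH = condProb P Yhat1 (Y1 ∩ ELᶜ))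
    (hFPRL : FPRL = condProb P Yhat1 (Y1ᶜ ∩ EL))
    (hFPRH : FPRH = condProb P Yhat1 (Y1ᶜ ∩ ELᶜ))
    (hTPRL01 : TPRL ∈ Set.Ioo (0:ℝ) 1) (hTPRH01 : TPRH ∈ Set.Ioo (0:ℝ) 1)
    (hFPRL01 : FPRL ∈ Set.Ioo (0:ℝ) 1) (hFPRH01 : FPRH ∈ Set.Ioo (0:ℝ) 1)
    (PPVL PPVH NPVL NPVH : ℝ)
    (hPPVL : PPVL = condProb P Y1 (Yhat1 ∩ EL))
    (hPPVH : PPVH = condProb P Y1 (Yhat1 ∩ ELᶜ))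
    (hNPVL : NPVL = condProb P Y1ᶜ (Yhat1ᶜ ∩ EL))
    (hNPVH : NPVH = condProb P Y1ᶜ (Yhat1ᶜ ∩ ELᶜ))
    (hPPV : PPVL < PPVH) (hTPR : TPRL ≥ TPRH) :
    condProb P EL Yhat1 > condProb P EL Y1 := by
  obtain ⟨hTL0, hTL1⟩ := hTPRL01
  obtain ⟨hTH0, hTH1⟩ := hTPRH01
  have pos : ∀ s : Set Ω, P s ≠ 0 → 0 < (P s).toReal :=
    fun s h => ENNReal.toReal_pos h (measure_ne_top P s)
  set a := (P (Y1 ∩ EL)).toReal with ha_def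
  set b := (P (Y1 ∩ ELᶜ)).toReal with hb_def
  set x := (P (Yhat1 ∩ EL)).toReal with hx_def
  set y := (P (Yhat1 ∩ ELᶜ)).toReal with hy_def
  have ha : 0 < a := pos _ hYGL
  have hb : 0 < b := pos _ hYGH
  have hx : 0 < x := pos _ hYhGL
  have hy : 0 < y := pos _ hYhGH
  have hsetL : Yhat1 ∩ (Y1 ∩ EL) = Y1 ∩ (Yhat1 ∩ EL) := by
    rw [Set.inter_left_comm]
  have hsetH : Yhat1 ∩ (Y1 ∩ ELᶜ) = Y1 ∩ (Yhat1 ∩ ELᶜ) := by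
    rw [Set.inter_left_comm]
  have e1 : TPRL * a = PPVL * x := by
    rw [hTPRL, hPPVL, condProb, condProb, div_mul_cancel₀ _ ha.ne',
      div_mul_cancel₀ _ hx.ne', hsetL]
  have e2 : TPRH * b = PPVH * y := by
    rw [hTPRH, hPPVH, condProb, condProb, div_mul_cancel₀ _ hb.ne',
      div_mul_cancel₀ _ hy.ne', hsetH]
  have hPL : 0 < PPVL := by
    have h : 0 < PPVL * x := by rw [← e1]; exact mul_pos hTL0 ha
    exact ((mul_pos_iff.mp h).resolve_right
      (fun h2 => absurd hx (not_lt.mpr h2.2.le))).1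
  have hPH : 0 < PPVH := hPL.trans hPPV
  have hYhat : (P Yhat1).toReal = x + y := by
    rw [← measure_inter_add_diff Yhat1 hEL, Set.diff_eq,
      ENNReal.toReal_add (measure_ne_top P _) (measure_ne_top P _)]
  have hY : (P Y1).toReal = a + b := by
    rw [← measure_inter_add_diff Y1 hEL, Set.diff_eq,
      ENNReal.toReal_add (measure_ne_top P _) (measure_ne_top P _)]
  have step : TPRH * PPVL < TPRL * PPVH :=
    lt_of_lt_of_le (mul_lt_mul_of_pos_left hPPV hTH0)
      (mul_le_mul_of_nonneg_right hTPR hPH.le)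
  have key : a * y < x * b := by
    have h1 : a * y * (PPVL * PPVH) = TPRH * PPVL * (a * b) := by
      linear_combination (-(a * PPVL)) * e2
    have h2 : x * b * (PPVL * PPVH) = TPRL * PPVH * (a * b) := by
      linear_combination (-(b * PPVH)) * e1
    have h3 : a * y * (PPVL * PPVH) < x * b * (PPVL * PPVH) := by
      rw [h1, h2]; exact mul_lt_mul_of_pos_right step (mul_pos ha hb)
    exact lt_of_mul_lt_mul_right h3 (mul_pos hPL hPH).le
  rw [gt_iff_lt, condProb, condProb, Set.inter_comm EL Yhat1, Set.inter_comm EL Y1,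
    hYhat, hY]
  rw [← ha_def, ← hx_def]
  rw [div_lt_div_iff₀ (by positivity) (by positivity)]
  have expand : x * (a + b) - a * (x + y) = x * b - a * y := by ring
  linarith [key, expand]
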